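/- Let X and Y be finite-dimensional Banach spaces, G ∈ L(X,Y) with ‖G‖ = 1, and T ∈ L(X,Y). Then S_G(T) = { y*(Tx) : x ∈ S_X, y* ∈ S_{Y*}, ‖Gx‖ = 1 }. -/

import Mathlib

open Filter Topology

variable {𝕜 : Type*} [RCLike 𝕜]

/-- `S_G(T) := ⋂_{δ>0} closure {y*(Tx) : x ∈ S_X, y* ∈ S_{Y*}, ‖Gx‖ > 1 - δ}`. -/
def SG {X Y : Type*} [NormedAddCommGroup X] [NormedSpace 𝕜 X]
    [NormedAddCommGroup Y] [NormedSpace 𝕜 Y] (G T : X →L[𝕜] Y) : Set 𝕜 :=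
  ⋂ δ ∈ Set.Ioi (0 : ℝ),
    closure {z : 𝕜 | ∃ (x : X) (f : Y →L[𝕜] 𝕜),
      ‖x‖ = 1 ∧ ‖f‖ = 1 ∧ 1 - δ < ‖G x‖ ∧ z = f (T x)}

/-- For finite-dimensional Banach spaces `X, Y`, a norm-one `G ∈ L(X,Y)` and `T ∈ L(X,Y)`,
`S_G(T) = { y*(Tx) : x ∈ S_X, y* ∈ S_{Y*}, ‖Gx‖ = 1 }`. -/
theorem stmt_5 {X Y : Type*} [NormedAddCommGroup X] [NormedSpace 𝕜 X] [FiniteDimensional 𝕜 X]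
    [NormedAddCommGroup Y] [NormedSpace 𝕜 Y] [FiniteDimensional 𝕜 Y]
    (G : X →L[𝕜] Y) (hG : ‖G‖ = 1) (T : X →L[𝕜] Y) :
    SG G T = {z : 𝕜 | ∃ (x : X) (f : Y →L[𝕜] 𝕜),
      ‖x‖ = 1 ∧ ‖f‖ = 1 ∧ ‖G x‖ = 1 ∧ z = f (T x)} := by
  ext z
  simp only [SG, Set.mem_iInter, Set.mem_setOf_eq]
  constructor
  · intro h
    have hseq : ∀ n : ℕ, ∃ (x : X) (f : Y →L[𝕜] 𝕜), ‖x‖ = 1 ∧ ‖f‖ = 1 ∧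
        1 - ((n : ℝ) + 1)⁻¹ < ‖G x‖ ∧ ‖z - f (T x)‖ < ((n : ℝ) + 1)⁻¹ := by
      intro n
      have hpos : (0 : ℝ) < ((n : ℝ) + 1)⁻¹ := by positivity
      have hz := h _ (Set.mem_Ioi.mpr hpos)
      rcases Metric.mem_closure_iff.mp hz _ hpos with ⟨w, hw, hd⟩
      obtain ⟨x, f, hx, hf, hGx, rfl⟩ := hw
      exact ⟨x, f, hx, hf, hGx, by rwa [dist_eq_norm] at hd⟩
    choose x f hx hf hGx hzf using hseq
    haveI : ProperSpace X := FiniteDimensional.proper_rclike 𝕜 X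
    haveI : ProperSpace (Y →L[𝕜] 𝕜) := FiniteDimensional.proper_rclike 𝕜 _
    have hxs : ∀ n, x n ∈ Metric.sphere (0 : X) 1 := fun n => by simp [hx n]
    obtain ⟨x₀, hx₀, φ, hφ, hxlim⟩ := (isCompact_sphere (0 : X) 1).tendsto_subseq hxs
    have hfs : ∀ n, f (φ n) ∈ Metric.sphere (0 : Y →L[𝕜] 𝕜) 1 := fun n => by simp [hf]
    obtain ⟨f₀, hf₀, ψ, hψ, hflim⟩ :=
      (isCompact_sphere (0 : Y →L[𝕜] 𝕜) 1).tendsto_subseq hfs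
    set σ : ℕ → ℕ := φ ∘ ψ with hσ
    have hσmono : StrictMono σ := hφ.comp hψ
    have hxlim' : Tendsto (fun n => x (σ n)) atTop (𝓝 x₀) :=
      hxlim.comp hψ.tendsto_atTop
    have hflim' : Tendsto (fun n => f (σ n)) atTop (𝓝 f₀) := hflim
    have hx₀1 : ‖x₀‖ = 1 := by simpa using hx₀
    have hf₀1 : ‖f₀‖ = 1 := by simpa using hf₀
    -- ‖G x₀‖ = 1
    have hGlim : Tendsto (fun n => ‖G (x (σ n))‖) atTop (𝓝 ‖G x₀‖) :=
      ((G.continuous.tendsto x₀).comp hxlim').norm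
    have h0 : Tendsto (fun n : ℕ => ((n : ℝ) + 1)⁻¹) atTop (𝓝 0) := by
      simpa [one_div] using (tendsto_one_div_add_atTop_nhds_zero_nat :
        Tendsto (fun n : ℕ => 1 / ((n : ℝ) + 1)) atTop (𝓝 0))
    have hlow : Tendsto (fun n : ℕ => 1 - ((n : ℝ) + 1)⁻¹) atTop (𝓝 1) := by
      have := (tendsto_const_nhds (x := (1 : ℝ)) (f := atTop (α := ℕ))).sub h0
      simpa using this
    have hσle : ∀ n : ℕ, ((σ n : ℝ) + 1)⁻¹ ≤ ((n : ℝ) + 1)⁻¹ := by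
      intro n
      have hn : (n : ℝ) ≤ σ n := by exact_mod_cast hσmono.id_le n
      apply inv_anti₀ (by positivity)
      linarith
    have hge : (1 : ℝ) ≤ ‖G x₀‖ := by
      refine le_of_tendsto_of_tendsto' hlow hGlim fun n => ?_
      linarith [hGx (σ n), hσle n]
    have hle : ‖G x₀‖ ≤ 1 := by
      calc ‖G x₀‖ ≤ ‖G‖ * ‖x₀‖ := G.le_opNorm x₀
        _ = 1 := by rw [hG, hx₀1, one_mul]
    -- z = f₀ (T x₀)
    have hTlim : Tendsto (fun n => T (x (σ n))) atTop (𝓝 (T x₀)) :=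
      (T.continuous.tendsto x₀).comp hxlim'
    have heval : Tendsto (fun n => (f (σ n)) (T (x (σ n)))) atTop (𝓝 (f₀ (T x₀))) := by
      have hcont : Continuous fun p : (Y →L[𝕜] 𝕜) × Y => p.1 p.2 :=
        isBoundedBilinearMap_apply.continuous
      exact (hcont.tendsto (f₀, T x₀)).comp (hflim'.prodMk_nhds hTlim)
    have hzlim : Tendsto (fun n => (f (σ n)) (T (x (σ n)))) atTop (𝓝 z) := by
      rw [tendsto_iff_norm_sub_tendsto_zero]
      refine squeeze_zero (fun n => norm_nonneg _) (fun n => ?_) h0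
      rw [← norm_neg, neg_sub]
      exact le_trans (hzf (σ n)).le (hσle n)
    exact ⟨x₀, f₀, hx₀1, hf₀1, le_antisymm hle hge, tendsto_nhds_unique hzlim heval⟩
  · rintro ⟨x, f, hx, hf, hGx, rfl⟩ δ hδ
    apply subset_closure
    exact ⟨x, f, hx, hf, by rw [hGx]; linarith [Set.mem_Ioi.mp hδ], rfl⟩
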